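/- Let g be a perfect Lie algebra with zero center. If the holomorph h(g) = g ⋊ Der(g) is complete, then the center of the outer derivation algebra Der(g)/ad(g) is zero. -/

import Mathlib

section HolomorphDef

variable (K : Type*) (L : Type*) [Field K] [LieRing L] [LieAlgebra K L]

/-- The bracket `[(x,d),(y,e)] = ([x,y] + d(y) - e(x), [d,e])` on `g ⊕ Der(g)`. -/
def holoBracket (h h' : L × LieDerivation K L L) : L × LieDerivation K L L :=
  (⁅h.1, h'.1⁆ + h.2 h'.1 - h'.2 h.1, ⁅h.2, h'.2⁆)

variable {K L}

lemma holoBracket_add_left (x y z : L × LieDerivation K L L) :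
    holoBracket K L (x + y) z = holoBracket K L x z + holoBracket K L y z := by
  simp only [holoBracket, Prod.ext_iff, Prod.fst_add, Prod.snd_add, add_lie,
    LieDerivation.coe_add, Pi.add_apply, map_add]
  constructor
  · abel
  · simp [add_lie]

lemma holoBracket_add_right (x y z : L × LieDerivation K L L) :
    holoBracket K L x (y + z) = holoBracket K L x y + holoBracket K L x z := by
  simp only [holoBracket, Prod.ext_iff, Prod.fst_add, Prod.snd_add, lie_add,
    LieDerivation.coe_add, Pi.add_apply, map_add]
  constructor
  · abel
  · simp [lie_add]

lemma holoBracket_self (x : L × LieDerivation K L L) : holoBracket K L x x = 0 := by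
  simp [holoBracket, Prod.ext_iff]

lemma holoBracket_leibniz (x y z : L × LieDerivation K L L) :
    holoBracket K L x (holoBracket K L y z) =
      holoBracket K L (holoBracket K L x y) z + holoBracket K L y (holoBracket K L x z) := by
  simp only [holoBracket, Prod.ext_iff, Prod.fst_add, Prod.snd_add,
    LieDerivation.commutator_apply, map_add, map_sub, lie_add, lie_sub, add_lie, sub_lie,
    LieDerivation.apply_lie_eq_add]
  constructor
  · rw [leibniz_lie x.1 y.1 z.1, ← lie_skew (z.2 x.1) y.1]
    abel
  · rw [leibniz_lie]

lemma holoBracket_smul (t : K) (x y : L × LieDerivation K L L) :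
    holoBracket K L x (t • y) = t • holoBracket K L x y := by
  refine Prod.ext ?_ ?_
  · simp [holoBracket, smul_add, smul_sub]
  · exact lie_smul t x.2 y.2

variable (K L)

/-- The holomorph `h(g) = g ⋊ Der(g)` of a Lie algebra `g`: as a vector space it is
the direct sum `g ⊕ Der(g)`. -/
def Holomorph := L × LieDerivation K L L

namespace Holomorph

instance : AddCommGroup (Holomorph K L) :=
  inferInstanceAs (AddCommGroup (L × LieDerivation K L L))

instance : Module K (Holomorph K L) :=
  inferInstanceAs (Module K (L × LieDerivation K L L))

instance : LieRing (Holomorph K L) where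
  bracket h h' := holoBracket K L h h'
  add_lie := holoBracket_add_left
  lie_add := holoBracket_add_right
  lie_self := holoBracket_self
  leibniz_lie := holoBracket_leibniz

instance : LieAlgebra K (Holomorph K L) where
  lie_smul := holoBracket_smul

variable {K L}

/-- The element `(x, d)` (also written `x + d`) of the holomorph. -/
def mk (x : L) (d : LieDerivation K L L) : Holomorph K L := (x, d)

/-- The `g`-component of an element of the holomorph. -/
def fst (h : Holomorph K L) : L := (show L × LieDerivation K L L from h).1

/-- The `Der(g)`-component of an element of the holomorph. -/
def snd (h : Holomorph K L) : LieDerivation K L L := (show L × LieDerivation K L L from h).2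

@[simp] lemma fst_mk (x : L) (d : LieDerivation K L L) : (mk x d).fst = x := rfl
@[simp] lemma snd_mk (x : L) (d : LieDerivation K L L) : (mk x d).snd = d := rfl

lemma ext {h h' : Holomorph K L} (h1 : h.fst = h'.fst) (h2 : h.snd = h'.snd) : h = h' :=
  Prod.ext h1 h2

/-- The bracket of the holomorph is `[(x,d),(y,e)] = ([x,y] + d(y) - e(x), [d,e])`. -/
lemma bracket_def (x y : L) (d e : LieDerivation K L L) :
    ⁅mk x d, mk y e⁆ = mk (⁅x, y⁆ + d y - e x) ⁅d, e⁆ := rfl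

end Holomorph

end HolomorphDef

/-- A Lie algebra is complete if its center is zero and every derivation is inner. -/
def IsCompleteLieAlgebra (K : Type*) (M : Type*) [Field K] [LieRing M] [LieAlgebra K M] : Prop :=
  LieAlgebra.center K M = ⊥ ∧
    ∀ D : LieDerivation K M M, ∃ m : M, D = LieDerivation.ad K M m


namespace HoloAux

variable {K L : Type*} [Field K] [LieRing L] [LieAlgebra K L]

/-- The derivation `(x, e) ↦ (D x + φ e, 0)` of the holomorph, given `D` a derivation
whose bracket with any derivation `e` is `ad (φ e)`. -/
def delta (D : LieDerivation K L L) (φ : LieDerivation K L L →ₗ[K] L)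
    (had : ∀ (e : LieDerivation K L L) (y : L), ⁅y, φ e⁆ = e (D y) - D (e y))
    (hbr : ∀ d e : LieDerivation K L L, φ ⁅d, e⁆ = d (φ e) - e (φ d)) :
    LieDerivation K (Holomorph K L) (Holomorph K L) where
  toLinearMap :=
    { toFun := fun h => Holomorph.mk (D h.fst + φ h.snd) 0
      map_add' := fun a b => by
        refine Prod.ext ?_ ?_
        · show D (a.fst + b.fst) + φ (a.snd + b.snd) =
            (D a.fst + φ a.snd) + (D b.fst + φ b.snd)
          rw [map_add, map_add]; abel
        · show (0 : LieDerivation K L L) = 0 + 0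
          simp
      map_smul' := fun t a => by
        refine Prod.ext ?_ ?_
        · show D (t • a.fst) + φ (t • a.snd) = t • (D a.fst + φ a.snd)
          rw [map_smul, map_smul, smul_add]
        · show (0 : LieDerivation K L L) = t • 0
          simp }
  leibniz' := fun a b => by
    have key : D (⁅a.fst, b.fst⁆ + a.snd b.fst - b.snd a.fst) + φ ⁅a.snd, b.snd⁆ =
        (⁅a.fst, D b.fst + φ b.snd⁆ + a.snd (D b.fst + φ b.snd) - 0) -
          (⁅b.fst, D a.fst + φ a.snd⁆ + b.snd (D a.fst + φ a.snd) - 0) := by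
      simp only [map_sub, map_add, LieDerivation.apply_lie_eq_add, hbr, lie_add, had,
        sub_zero]
      rw [← lie_skew (D a.fst) b.fst]
      abel
    refine Prod.ext key ?_
    show (0 : LieDerivation K L L) = ⁅a.snd, (0 : LieDerivation K L L)⁆ - ⁅b.snd, 0⁆
    simp

@[simp] lemma delta_apply (D : LieDerivation K L L) (φ : LieDerivation K L L →ₗ[K] L)
    (had) (hbr) (h : Holomorph K L) :
    delta D φ had hbr h = Holomorph.mk (D h.fst + φ h.snd) 0 := rfl

end HoloAux

/-- Let `g` be perfect with zero center. If the holomorph `h(g)` is complete, then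
the outer derivation algebra `Der(g)/ad(g)` has zero center. -/
theorem center_outer_eq_bot_of_holomorph_isComplete (K : Type*) (L : Type*) [Field K]
    [LieRing L] [LieAlgebra K L] (hperf : ⁅(⊤ : LieIdeal K L), (⊤ : LieIdeal K L)⁆ = ⊤)
    (hc : LieAlgebra.center K L = ⊥)
    (hcomp : IsCompleteLieAlgebra K (Holomorph K L)) :
    LieAlgebra.center K (LieDerivation K L L ⧸ (LieDerivation.ad K L).idealRange) = ⊥ := by
  obtain ⟨hcz, hci⟩ := hcomp
  rw [eq_bot_iff]
  intro Dbar hDbar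
  rw [LieSubmodule.mem_bot]
  obtain ⟨D, rfl⟩ := LieSubmodule.Quotient.surjective_mk' _ Dbar
  have inj : Function.Injective (LieDerivation.ad K L) :=
    LieDerivation.injective_ad_of_center_eq_bot hc
  -- centrality gives, for every `E`, some `x` with `ad x = ⁅D, E⁆`
  have hcen : ∀ E : LieDerivation K L L, ∃ x, LieDerivation.ad K L x = ⁅D, E⁆ := by
    intro E
    have h0 := (LieModule.mem_maxTrivSubmodule K _ _ _).mp hDbar
      (LieSubmodule.Quotient.mk' _ E)
    have h1 : LieSubmodule.Quotient.mk' (LieDerivation.ad K L).idealRange ⁅E, D⁆ = 0 := by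
      exact h0
    rw [LieSubmodule.Quotient.mk_eq_zero] at h1
    obtain ⟨x, hx⟩ := LieDerivation.mem_ad_idealRange_iff.mp h1
    exact ⟨-x, by rw [map_neg, hx, lie_skew]⟩
  choose f hf using hcen
  let φ : LieDerivation K L L →ₗ[K] L :=
    { toFun := f
      map_add' := fun d e => inj (by rw [hf, map_add, hf, hf, lie_add])
      map_smul' := fun t d => by
        refine inj ?_
        rw [map_smul, hf, hf]
        simp [lie_smul] }
  have hφ : ∀ E, LieDerivation.ad K L (φ E) = ⁅D, E⁆ := hf
  have had : ∀ (e : LieDerivation K L L) (y : L), ⁅y, φ e⁆ = e (D y) - D (e y) := by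
    intro e y
    have h2 := DFunLike.congr_fun (hφ e) y
    rw [LieDerivation.ad_apply_apply, LieDerivation.commutator_apply] at h2
    rw [← lie_skew, h2]; abel
  have hbr : ∀ d e : LieDerivation K L L, φ ⁅d, e⁆ = d (φ e) - e (φ d) := by
    intro d e
    refine inj ?_
    rw [hφ ⁅d, e⁆, leibniz_lie D d e, ← hφ d, ← hφ e,
      LieDerivation.lie_der_ad_eq_ad_der d (φ e),
      ← lie_skew (LieDerivation.ad K L (φ d)) e,
      LieDerivation.lie_der_ad_eq_ad_der e (φ d), map_sub]
    abel
  obtain ⟨m, hm⟩ := hci (HoloAux.delta D φ had hbr)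
  have hmk : ∀ h : Holomorph K L,
      Holomorph.mk (D h.fst + φ h.snd) 0 = ⁅m, h⁆ := by
    intro h
    have := DFunLike.congr_fun hm h
    rwa [HoloAux.delta_apply, LieDerivation.ad_apply_apply] at this
  -- second components: `⁅m.snd, e⁆ = 0` for every `e`
  have hsnd : ∀ e : LieDerivation K L L, ⁅m.snd, e⁆ = 0 := by
    intro e
    have h2 := hmk (Holomorph.mk 0 e)
    have : m = Holomorph.mk m.fst m.snd := rfl
    rw [this, Holomorph.bracket_def] at h2
    have := congrArg Holomorph.snd h2
    simpa using this.symm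
  have hF : m.snd = 0 := by
    refine LieDerivation.ext fun x => ?_
    have h3 : LieDerivation.ad K L (m.snd x) = 0 := by
      rw [← LieDerivation.lie_der_ad_eq_ad_der, hsnd]
    have := inj (h3.trans (map_zero _).symm)
    simpa using this
  -- first components at `(x, 0)` give `D = ad m.fst`
  have hD : D = LieDerivation.ad K L m.fst := by
    refine LieDerivation.ext fun x => ?_
    have h2 := hmk (Holomorph.mk x 0)
    have hm' : m = Holomorph.mk m.fst m.snd := rfl
    rw [hm', Holomorph.bracket_def] at h2
    have h4 := congrArg Holomorph.fst h2
    simp only [Holomorph.fst_mk, map_zero, add_zero, LieDerivation.coe_zero, Pi.zero_apply,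
      sub_zero, hF] at h4
    rw [LieDerivation.ad_apply_apply]
    simpa using h4
  rw [LieSubmodule.Quotient.mk_eq_zero, hD]
  exact (LieDerivation.ad K L).mem_idealRange m.fst
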